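/- Let (M,d) be a compact metric space, E : M → ℝ continuous and nonnegative, h > 0, and χ⁰ ∈ M. Let χ : ℕ → M satisfy χ(0) = χ⁰ and, for every n ≥ 1, χ(n) minimizes u ↦ d²(u, χ(n−1))/(2h) + E(u) over M; let χ_h(t) := χ(n) for t ∈ [nh, (n+1)h) be the piecewise constant interpolation. Let u : (0,∞) → M be such that for every n ≥ 1 and t ∈ ((n−1)h, nh], u(t) minimizes v ↦ d²(v, χ(n−1))/(2(t−(n−1)h)) + E(v) over M, with u(nh) = χ(n). Then (i) E(u(t)) ≤ E(χ_h(t−h)) for all t > 0 (equivalently E(u(t)) ≤ E(χ(n−1)) for t ∈ ((n−1)h, nh]), and (ii) ∫_0^∞ d²(u(t), χ_h(t))/(2h²) dt ≤ E(χ⁰). -/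

import Mathlib

open MeasureTheory Filter Topology
open scoped ENNReal

section Aux

variable {M : Type*} [MetricSpace M]

/-- The minimum value of the Moreau–Yosida type functional `v ↦ d(v,x)²/(2σ) + E v`,
with the convention that it equals `E x` for `σ ≤ 0`. -/
noncomputable def myFval (E : M → ℝ) (x : M) (σ : ℝ) : ℝ :=
  if σ ≤ 0 then E x else ⨅ v : M, dist v x ^ 2 / (2 * σ) + E v

lemma myFval_bddBelow (E : M → ℝ) (hE : ∀ v, 0 ≤ E v) (x : M) {σ : ℝ} (hσ : 0 < σ) :
    BddBelow (Set.range fun v : M => dist v x ^ 2 / (2 * σ) + E v) := by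
  refine ⟨0, ?_⟩
  rintro y ⟨v, rfl⟩
  exact add_nonneg (div_nonneg (sq_nonneg _) (by linarith)) (hE v)

lemma myFval_le [Nonempty M] (E : M → ℝ) (hE : ∀ v, 0 ≤ E v) (x : M) {σ : ℝ} (hσ : 0 < σ)
    (v : M) : myFval E x σ ≤ dist v x ^ 2 / (2 * σ) + E v := by
  rw [myFval, if_neg (not_le.2 hσ)]
  exact ciInf_le (myFval_bddBelow E hE x hσ) v

lemma le_myFval [Nonempty M] (E : M → ℝ) (x : M) {σ : ℝ} (hσ : 0 < σ) {a : ℝ}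
    (ha : ∀ v : M, a ≤ dist v x ^ 2 / (2 * σ) + E v) : a ≤ myFval E x σ := by
  rw [myFval, if_neg (not_le.2 hσ)]
  exact le_ciInf ha

lemma myFval_nonneg [Nonempty M] (E : M → ℝ) (hE : ∀ v, 0 ≤ E v) (x : M) (σ : ℝ) :
    0 ≤ myFval E x σ := by
  rw [myFval]
  split_ifs with hσ
  · exact hE x
  · exact le_ciInf fun v =>
      add_nonneg (div_nonneg (sq_nonneg _) (by linarith [not_le.1 hσ])) (hE v)

lemma myFval_le_self [Nonempty M] (E : M → ℝ) (hE : ∀ v, 0 ≤ E v) (x : M) (σ : ℝ) :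
    myFval E x σ ≤ E x := by
  rw [myFval]
  split_ifs with hσ
  · exact le_rfl
  · have hσ' : 0 < σ := not_le.1 hσ
    have := ciInf_le (myFval_bddBelow E hE x hσ') x
    simpa [dist_self] using this

lemma myFval_antitone [Nonempty M] (E : M → ℝ) (hE : ∀ v, 0 ≤ E v) (x : M) {σ' σ : ℝ}
    (h0 : 0 ≤ σ') (h1 : σ' ≤ σ) : myFval E x σ ≤ myFval E x σ' := by
  rcases le_or_gt σ' 0 with hσ' | hσ'
  · have h2 : myFval E x σ' = E x := by rw [myFval, if_pos hσ']
    rw [h2]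
    exact myFval_le_self E hE x σ
  · have hσ : 0 < σ := lt_of_lt_of_le hσ' h1
    rw [myFval, if_neg (not_le.2 hσ), myFval, if_neg (not_le.2 hσ')]
    refine ciInf_mono (myFval_bddBelow E hE x hσ) fun v => ?_
    have := div_le_div_of_nonneg_left (sq_nonneg (dist v x)) (by linarith : (0:ℝ) < 2 * σ') (by linarith : 2 * σ' ≤ 2 * σ)
    linarith

end Aux

set_option maxHeartbeats 1000000 in
theorem stmt_1 {M : Type*} [MetricSpace M] [CompactSpace M]
    (E : M → ℝ) (hE : Continuous E) (hEnonneg : ∀ x, 0 ≤ E x)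
    (h : ℝ) (hh : 0 < h) (χ0 : M) (χ : ℕ → M) (hinit : χ 0 = χ0)
    (hmin : ∀ n : ℕ, 1 ≤ n → ∀ v : M,
      dist (χ n) (χ (n - 1)) ^ 2 / (2 * h) + E (χ n) ≤
        dist v (χ (n - 1)) ^ 2 / (2 * h) + E v)
    (χh : ℝ → M)
    (hχh : ∀ n : ℕ, ∀ t : ℝ, (n : ℝ) * h ≤ t → t < ((n : ℝ) + 1) * h → χh t = χ n)
    (hχh0 : ∀ t : ℝ, t ≤ 0 → χh t = χ 0)
    (u : ℝ → M)
    (humin : ∀ n : ℕ, 1 ≤ n → ∀ t : ℝ, ((n : ℝ) - 1) * h < t → t ≤ (n : ℝ) * h →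
      ∀ v : M,
        dist (u t) (χ (n - 1)) ^ 2 / (2 * (t - ((n : ℝ) - 1) * h)) + E (u t) ≤
          dist v (χ (n - 1)) ^ 2 / (2 * (t - ((n : ℝ) - 1) * h)) + E v)
    (huend : ∀ n : ℕ, 1 ≤ n → u ((n : ℝ) * h) = χ n) :
    (∀ t : ℝ, 0 < t → E (u t) ≤ E (χh (t - h))) ∧
    (∫⁻ t in Set.Ioi (0 : ℝ),
        ENNReal.ofReal (dist (u t) (χh t) ^ 2 / (2 * h ^ 2)) ≤
      ENNReal.ofReal (E χ0)) := by
  have hM : Nonempty M := ⟨χ0⟩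
  -- `E ∘ χ` is antitone
  have hEχ : ∀ n : ℕ, E (χ (n + 1)) ≤ E (χ n) := by
    intro n
    have key := hmin (n + 1) (Nat.le_add_left 1 n) (χ n)
    simp only [Nat.add_sub_cancel, dist_self] at key
    have h1 : 0 ≤ dist (χ (n + 1)) (χ n) ^ 2 / (2 * h) :=
      div_nonneg (sq_nonneg _) (by linarith)
    have h2 : (0 : ℝ) ^ 2 / (2 * h) = 0 := by norm_num
    linarith
  have hEanti : Antitone fun n : ℕ => E (χ n) := antitone_nat_of_succ_le hEχ
  -- generic facts about `Nat.floor (t/h)`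
  have hfloor : ∀ t : ℝ, 0 ≤ t →
      ((⌊t / h⌋₊ : ℝ) * h ≤ t ∧ t < ((⌊t / h⌋₊ : ℝ) + 1) * h) := by
    intro t ht
    have h1 : (⌊t / h⌋₊ : ℝ) ≤ t / h := Nat.floor_le (div_nonneg ht hh.le)
    have h2 : t / h < (⌊t / h⌋₊ : ℝ) + 1 := Nat.lt_floor_add_one _
    constructor
    · calc (⌊t / h⌋₊ : ℝ) * h ≤ (t / h) * h := by gcongr
        _ = t := by field_simp
    · calc t = (t / h) * h := by field_simp
        _ < ((⌊t / h⌋₊ : ℝ) + 1) * h := by gcongr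
  -- Part (i)
  have part1 : ∀ t : ℝ, 0 < t → E (u t) ≤ E (χh (t - h)) := by
    intro t ht
    set n := ⌈t / h⌉₊ with hn
    have hn1 : 1 ≤ n := Nat.one_le_iff_ne_zero.2 (by
      simp only [hn, ne_eq, Nat.ceil_eq_zero, not_le]
      exact div_pos ht hh)
    have htn : t ≤ (n : ℝ) * h := by
      have h1 : t / h ≤ (n : ℝ) := Nat.le_ceil _
      calc t = (t / h) * h := by field_simp
        _ ≤ (n : ℝ) * h := by gcongr
    have htn' : ((n : ℝ) - 1) * h < t := by
      have h2 : (n : ℝ) < t / h + 1 := Nat.ceil_lt_add_one (div_pos ht hh).le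
      have h3 : ((n : ℝ) - 1) < t / h := by linarith
      calc ((n : ℝ) - 1) * h < (t / h) * h := mul_lt_mul_of_pos_right h3 hh
        _ = t := by field_simp
    have τpos : 0 < t - ((n : ℝ) - 1) * h := by linarith
    have key := humin n hn1 t htn' htn (χ (n - 1))
    rw [dist_self] at key
    have h1 : 0 ≤ dist (u t) (χ (n - 1)) ^ 2 / (2 * (t - ((n : ℝ) - 1) * h)) :=
      div_nonneg (sq_nonneg _) (by linarith)
    have h2 : (0 : ℝ) ^ 2 / (2 * (t - ((n : ℝ) - 1) * h)) = 0 := by norm_num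
    have hEut : E (u t) ≤ E (χ (n - 1)) := by linarith
    rcases le_or_gt (t - h) 0 with hth | hth
    · rw [hχh0 _ hth]
      exact hEut.trans (hEanti (Nat.zero_le _))
    · set m := ⌊(t - h) / h⌋₊ with hm
      obtain ⟨hm1, hm2⟩ := hfloor (t - h) hth.le
      rw [hχh m (t - h) hm1 hm2]
      have hmn : m ≤ n - 1 := by
        have hc : ((n - 1 : ℕ) : ℝ) = (n : ℝ) - 1 := by
          push_cast [hn1]; ring
        have h4 : (m : ℝ) * h ≤ ((n : ℝ) - 1) * h := by nlinarith
        have h5 : (m : ℝ) ≤ ((n - 1 : ℕ) : ℝ) := by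
          rw [hc]; exact le_of_mul_le_mul_right h4 hh
        exact_mod_cast h5
      exact hEut.trans (hEanti hmn)
  refine ⟨part1, ?_⟩
  -- Part (ii): the monotone function `f`
  set f : ℝ → ℝ := fun t =>
    if t < 0 then -E (χ 0) else -myFval E (χ ⌊t / h⌋₊) (t - (⌊t / h⌋₊ : ℝ) * h) with hf
  have hf_of_nonneg : ∀ t : ℝ, 0 ≤ t →
      f t = -myFval E (χ ⌊t / h⌋₊) (t - (⌊t / h⌋₊ : ℝ) * h) := by
    intro t ht
    simp only [hf, if_neg (not_lt.2 ht)]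
  have hf_nonpos : ∀ t : ℝ, f t ≤ 0 := by
    intro t
    rcases lt_or_ge t 0 with ht | ht
    · simp only [hf, if_pos ht]
      linarith [hEnonneg (χ 0)]
    · rw [hf_of_nonneg t ht]
      linarith [myFval_nonneg E hEnonneg (χ ⌊t / h⌋₊) (t - (⌊t / h⌋₊ : ℝ) * h)]
  have hf_lb : ∀ t : ℝ, -E (χ 0) ≤ f t := by
    intro t
    rcases lt_or_ge t 0 with ht | ht
    · simp [hf, if_pos ht]
    · rw [hf_of_nonneg t ht]
      have h1 := myFval_le_self E hEnonneg (χ ⌊t / h⌋₊) (t - (⌊t / h⌋₊ : ℝ) * h)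
      have h2 : E (χ ⌊t / h⌋₊) ≤ E (χ 0) := hEanti (Nat.zero_le _)
      linarith
  -- lower bound by next step value
  have hf_lb' : ∀ t : ℝ, 0 ≤ t → -E (χ ⌊t / h⌋₊) ≤ f t := by
    intro t ht
    rw [hf_of_nonneg t ht]
    linarith [myFval_le_self E hEnonneg (χ ⌊t / h⌋₊) (t - (⌊t / h⌋₊ : ℝ) * h)]
  -- upper bound: `f t ≤ -(E (χ (n+1)))`
  have hf_ub : ∀ t : ℝ, 0 ≤ t → f t ≤ -E (χ (⌊t / h⌋₊ + 1)) := by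
    intro t ht
    set n := ⌊t / h⌋₊ with hn
    obtain ⟨h1, h2⟩ := hfloor t ht
    rw [hf_of_nonneg t ht, neg_le_neg_iff]
    set τ := t - (n : ℝ) * h with hτ
    have hτ0 : 0 ≤ τ := by simp only [hτ]; linarith
    have hτh : τ < h := by simp only [hτ]; nlinarith
    rcases le_or_gt τ 0 with hτ0' | hτ0'
    · rw [myFval, if_pos hτ0']
      exact hEχ n
    · refine le_myFval E (χ n) hτ0' fun v => ?_
      have key := hmin (n + 1) (Nat.le_add_left 1 n) v
      simp only [Nat.add_sub_cancel] at key
      have h3 : 0 ≤ dist (χ (n + 1)) (χ n) ^ 2 / (2 * h) :=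
        div_nonneg (sq_nonneg _) (by linarith)
      have h4 : dist v (χ n) ^ 2 / (2 * h) ≤ dist v (χ n) ^ 2 / (2 * τ) :=
        div_le_div_of_nonneg_left (sq_nonneg _) (by linarith) (by linarith)
      linarith
  -- monotonicity of `f`
  have hmono : Monotone f := by
    intro s t hst
    rcases lt_or_ge s 0 with hs | hs
    · rcases lt_or_ge t 0 with ht | ht
      · simp [hf, if_pos hs, if_pos ht]
      · calc f s = -E (χ 0) := by simp [hf, if_pos hs]
          _ ≤ f t := hf_lb t
    · have ht : (0 : ℝ) ≤ t := hs.trans hst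
      have hdiv : s / h ≤ t / h := by gcongr
      have hns_le : ⌊s / h⌋₊ ≤ ⌊t / h⌋₊ := Nat.floor_le_floor hdiv
      rcases eq_or_lt_of_le hns_le with heq | hlt
      · rw [hf_of_nonneg s hs, hf_of_nonneg t ht, ← heq, neg_le_neg_iff]
        refine myFval_antitone E hEnonneg (χ ⌊s / h⌋₊) ?_ (by linarith)
        obtain ⟨h1, _⟩ := hfloor s hs
        linarith
      · have h1 := hf_ub s hs
        have h2 : E (χ ⌊t / h⌋₊) ≤ E (χ (⌊s / h⌋₊ + 1)) := hEanti hlt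
        have h3 := hf_lb' t ht
        linarith
  -- the Stieltjes measure
  set St := hmono.stieltjesFunction with hSt
  -- bound on the total measure of `Ioi 0`
  have hmeas_le : St.measure (Set.Ioi (0 : ℝ)) ≤ ENNReal.ofReal (E χ0) := by
    have hIoi : Set.Ioi (0 : ℝ) = ⋃ k : ℕ, Set.Ioc (0 : ℝ) k := by
      ext x
      simp only [Set.mem_Ioi, Set.mem_iUnion, Set.mem_Ioc]
      constructor
      · intro hx
        obtain ⟨k, hk⟩ := exists_nat_ge x
        exact ⟨k, hx, hk⟩
      · rintro ⟨k, hk, -⟩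
        exact hk
    have hdir : Directed (· ⊆ ·) fun k : ℕ => Set.Ioc (0 : ℝ) k := by
      intro i j
      refine ⟨max i j, Set.Ioc_subset_Ioc_right ?_, Set.Ioc_subset_Ioc_right ?_⟩
      · exact_mod_cast le_max_left i j
      · exact_mod_cast le_max_right i j
    rw [hIoi, hdir.measure_iUnion]
    refine iSup_le fun k => ?_
    rw [StieltjesFunction.measure_Ioc]
    apply ENNReal.ofReal_le_ofReal
    have e1 : St (k : ℝ) = Function.rightLim f (k : ℝ) := hmono.stieltjesFunction_eq _
    have e2 : St (0 : ℝ) = Function.rightLim f (0 : ℝ) := hmono.stieltjesFunction_eq _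
    have h1 : St (k : ℝ) ≤ 0 := by
      rw [e1]
      exact (hmono.rightLim_le (lt_add_one (k : ℝ))).trans (hf_nonpos _)
    have h2 : -E (χ 0) ≤ St (0 : ℝ) := by
      rw [e2]
      exact (hf_lb 0).trans (hmono.le_rightLim le_rfl)
    rw [← hinit]
    linarith
  -- the a.e. pointwise bound
  have hae : ∀ᵐ t ∂volume.restrict (Set.Ioi (0 : ℝ)),
      ENNReal.ofReal (dist (u t) (χh t) ^ 2 / (2 * h ^ 2)) ≤
        St.measure.rnDeriv volume t := by
    have hD : (Set.range fun k : ℕ => (k : ℝ) * h).Countable := Set.countable_range _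
    have h1 : ∀ᵐ t ∂(volume : Measure ℝ),
        HasDerivAt f ((St.measure.rnDeriv volume t).toReal) t := hmono.ae_hasDerivAt
    have h2 : ∀ᵐ t ∂(volume : Measure ℝ), t ∉ Set.range fun k : ℕ => (k : ℝ) * h :=
      hD.ae_notMem volume
    have h3 : ∀ᵐ t ∂volume.restrict (Set.Ioi (0 : ℝ)), t ∈ Set.Ioi (0 : ℝ) :=
      ae_restrict_mem measurableSet_Ioi
    filter_upwards [ae_restrict_of_ae h1, ae_restrict_of_ae h2, h3]
      with t hderiv hnotmem htpos
    have ht0 : (0 : ℝ) < t := htpos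
    set n := ⌊t / h⌋₊ with hn
    obtain ⟨hnh_le, ht_lt⟩ := hfloor t ht0.le
    have hnh_lt : (n : ℝ) * h < t := by
      rcases lt_or_eq_of_le hnh_le with h' | h'
      · exact h'
      · exact absurd ⟨n, h'⟩ hnotmem
    have hχht : χh t = χ n := hχh n t hnh_le ht_lt
    set τ := t - (n : ℝ) * h with hτ
    have hτpos : 0 < τ := by simp only [hτ]; linarith
    have hτlth : τ < h := by simp only [hτ]; nlinarith
    set d := dist (u t) (χ n) with hd
    -- `u t` is a minimizer at parameter `τ`
    have hmin_t : ∀ v : M, d ^ 2 / (2 * τ) + E (u t) ≤ dist v (χ n) ^ 2 / (2 * τ) + E v := by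
      intro v
      have hc : ((n + 1 : ℕ) : ℝ) - 1 = (n : ℝ) := by push_cast; ring
      have ha : (((n + 1 : ℕ) : ℝ) - 1) * h < t := by rw [hc]; exact hnh_lt
      have hb : t ≤ ((n + 1 : ℕ) : ℝ) * h := by push_cast; nlinarith
      have key := humin (n + 1) (Nat.le_add_left 1 n) t ha hb v
      simp only [Nat.add_sub_cancel, hc] at key
      exact key
    -- `f` on the interval
    have hfval : ∀ s : ℝ, (n : ℝ) * h ≤ s → s < ((n : ℝ) + 1) * h →
        f s = -myFval E (χ n) (s - (n : ℝ) * h) := by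
      intro s hs1 hs2
      have hs0 : (0 : ℝ) ≤ s := le_trans (by positivity) hs1
      have hfl : ⌊s / h⌋₊ = n := by
        rw [Nat.floor_eq_iff (by positivity)]
        constructor
        · rw [le_div_iff₀ hh]; exact hs1
        · rw [div_lt_iff₀ hh]; push_cast; exact hs2
      rw [hf_of_nonneg s hs0, hfl]
    -- slope lower bound on the right
    have hslope : ∀ᶠ s in 𝓝[>] t, d ^ 2 / (2 * h ^ 2) ≤ (f s - f t) / (s - t) := by
      have hmem : Set.Ioo t (((n : ℝ) + 1) * h) ∈ 𝓝[>] t :=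
        Ioo_mem_nhdsGT_of_mem ⟨le_rfl, ht_lt⟩
      filter_upwards [hmem] with s hs
      obtain ⟨hs1, hs2⟩ := hs
      set σ := s - (n : ℝ) * h with hσ
      have hστ : τ < σ := by simp only [hσ, hτ]; linarith
      have hσh : σ < h := by simp only [hσ]; nlinarith
      have hσpos : 0 < σ := hτpos.trans hστ
      have hfs : f s = -myFval E (χ n) σ := hfval s (by linarith) hs2
      have hft : f t = -myFval E (χ n) τ := hfval t hnh_le ht_lt
      have hFτ : myFval E (χ n) τ = d ^ 2 / (2 * τ) + E (u t) :=
        le_antisymm (myFval_le E hEnonneg (χ n) hτpos (u t)) (le_myFval E (χ n) hτpos hmin_t)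
      have hFσ : myFval E (χ n) σ ≤ d ^ 2 / (2 * σ) + E (u t) :=
        myFval_le E hEnonneg (χ n) hσpos (u t)
      have hst : 0 < s - t := by linarith
      rw [le_div_iff₀ hst]
      have hστ' : σ - τ = s - t := by simp only [hσ, hτ]; ring
      have e1 : d ^ 2 / (2 * τ) - d ^ 2 / (2 * σ) = d ^ 2 * (s - t) / (2 * (τ * σ)) := by
        rw [← hστ']
        field_simp
      have e2 : d ^ 2 / (2 * h ^ 2) * (s - t) = d ^ 2 * (s - t) / (2 * (h * h)) := by
        ring
      have e3 : d ^ 2 * (s - t) / (2 * (h * h)) ≤ d ^ 2 * (s - t) / (2 * (τ * σ)) :=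
        div_le_div_of_nonneg_left (by positivity) (by positivity) (by nlinarith)
      have e4 : d ^ 2 / (2 * τ) - d ^ 2 / (2 * σ) ≤ f s - f t := by
        rw [hfs, hft]
        linarith
      linarith
    -- pass to the limit to bound the derivative
    have hd' : d ^ 2 / (2 * h ^ 2) ≤ (St.measure.rnDeriv volume t).toReal := by
      have htend : Tendsto (slope f t) (𝓝[>] t)
          (𝓝 ((St.measure.rnDeriv volume t).toReal)) := by
        refine (hasDerivAt_iff_tendsto_slope.1 hderiv).mono_left
          (nhdsWithin_mono _ fun x hx => ?_)
        exact ne_of_gt hx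
      refine ge_of_tendsto htend ?_
      filter_upwards [hslope] with s hs
      rwa [slope_def_field]
    calc ENNReal.ofReal (dist (u t) (χh t) ^ 2 / (2 * h ^ 2))
        = ENNReal.ofReal (d ^ 2 / (2 * h ^ 2)) := by rw [hχht]
      _ ≤ ENNReal.ofReal ((St.measure.rnDeriv volume t).toReal) :=
          ENNReal.ofReal_le_ofReal hd'
      _ ≤ St.measure.rnDeriv volume t := ENNReal.ofReal_toReal_le
  calc ∫⁻ t in Set.Ioi (0 : ℝ), ENNReal.ofReal (dist (u t) (χh t) ^ 2 / (2 * h ^ 2))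
      ≤ ∫⁻ t in Set.Ioi (0 : ℝ), St.measure.rnDeriv volume t := lintegral_mono_ae hae
    _ ≤ St.measure (Set.Ioi (0 : ℝ)) := Measure.setLIntegral_rnDeriv_le _
    _ ≤ ENNReal.ofReal (E χ0) := hmeas_le
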